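/- arXiv:2408.02894 — 2 statements merged into one kernel-verified Lean document; each statement's English description precedes it below -/
import Mathlib

section
/- (Block Trivial Lemma) Let E be a linear operator on ℂ^d with orthonormal basis B. Let S ⊆ B be nonempty with |S| = s and let {|ψ_i⟩}_{i=0}^{s-1} be a family of pairwise orthogonal nonzero vectors spanning span(S) such that ⟨ψ_i| E |ψ_j⟩ = 0 for all i ≠ j. Suppose there exists |x⟩ ∈ S with ⟨x| E |y⟩ = 0 for all |y⟩ ∈ S \ {|x⟩} and ⟨x|ψ_j⟩ ≠ 0 for all j. Then ⟨y| E |z⟩ = 0 for all distinct |y⟩, |z⟩ ∈ S, and ⟨y| E |y⟩ = ⟨z| E |z⟩ for all |y⟩, |z⟩ ∈ S. -/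
open scoped BigOperators

/-- Block Trivial Lemma -/
theorem stmt3 (d s : ℕ)
    (E : EuclideanSpace ℂ (Fin d) →ₗ[ℂ] EuclideanSpace ℂ (Fin d))
    (S : Finset (Fin d)) (hS : S.Nonempty) (hs : S.card = s)
    (ψ : Fin s → EuclideanSpace ℂ (Fin d))
    (hψ0 : ∀ i, ψ i ≠ 0)
    (hψorth : ∀ i i' : Fin s, i ≠ i' → (inner ℂ (ψ i) (ψ i') : ℂ) = 0)
    (hψspan : Submodule.span ℂ (Set.range ψ) =
      Submodule.span ℂ ((fun x : Fin d => EuclideanSpace.single x (1 : ℂ)) '' ↑S))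
    (hEψ : ∀ i j : Fin s, i ≠ j → (inner ℂ (ψ i) (E (ψ j)) : ℂ) = 0)
    (x : Fin d) (hx : x ∈ S)
    (hxE : ∀ y ∈ S, y ≠ x →
      (inner ℂ (EuclideanSpace.single x (1 : ℂ)) (E (EuclideanSpace.single y 1)) : ℂ) = 0)
    (hxψ : ∀ j : Fin s, (inner ℂ (EuclideanSpace.single x (1 : ℂ)) (ψ j) : ℂ) ≠ 0) :
    (∀ y ∈ S, ∀ z ∈ S, y ≠ z →
      (inner ℂ (EuclideanSpace.single y (1 : ℂ)) (E (EuclideanSpace.single z 1)) : ℂ) = 0) ∧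
    (∀ y ∈ S, ∀ z ∈ S,
      (inner ℂ (EuclideanSpace.single y (1 : ℂ)) (E (EuclideanSpace.single y 1)) : ℂ) =
      (inner ℂ (EuclideanSpace.single z (1 : ℂ)) (E (EuclideanSpace.single z 1)) : ℂ)) := by
  classical
  let e : Fin d → EuclideanSpace ℂ (Fin d) := fun t => EuclideanSpace.single t (1 : ℂ)
  -- e y ∈ span(range ψ) for y ∈ S
  have heV : ∀ y ∈ S, e y ∈ Submodule.span ℂ (Set.range ψ) := by
    intro y hy
    rw [hψspan]
    exact Submodule.subset_span ⟨y, by simpa using hy, rfl⟩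
  -- members of the span vanish off S
  have hsupp : ∀ v ∈ Submodule.span ℂ (Set.range ψ), ∀ t, t ∉ S → v t = 0 := by
    intro v hv
    rw [hψspan] at hv
    induction hv using Submodule.span_induction with
    | mem w hw =>
      obtain ⟨y, hy, rfl⟩ := hw
      intro t ht
      have hty : t ≠ y := by rintro rfl; exact ht (by simpa using hy)
      simp [EuclideanSpace.single_apply, hty]
    | zero => intro t _; rfl
    | add a b _ _ ha hb => intro t ht; show a t + b t = 0; rw [ha t ht, hb t ht, add_zero]
    | smul r a _ ha => intro t ht; show r * a t = 0; rw [ha t ht, mul_zero]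
  -- members of the span are sums over S of coordinates
  have hdecomp : ∀ v ∈ Submodule.span ℂ (Set.range ψ), v = ∑ y ∈ S, (v y) • e y := by
    intro v hv
    ext t
    rw [WithLp.ofLp_sum, Finset.sum_apply]
    by_cases ht : t ∈ S
    · rw [Finset.sum_eq_single t]
      · simp [e, EuclideanSpace.single_apply]
      · intro b _ hb
        simp [e, EuclideanSpace.single_apply, Ne.symm hb]
      · exact fun h => absurd ht h
    · rw [hsupp v hv t ht, Finset.sum_eq_zero]
      intro b hb
      have htb : t ≠ b := by rintro rfl; exact ht hb
      simp [e, EuclideanSpace.single_apply, htb]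
  set n : Fin s → ℂ := fun j => inner ℂ (ψ j) (ψ j) with hn
  have hn0 : ∀ j, n j ≠ 0 := fun j h => hψ0 j (inner_self_eq_zero.mp h)
  set μ : Fin s → ℂ := fun j => inner ℂ (ψ j) (E (ψ j)) / n j with hμ
  -- key: for w in the span, ⟪w, E ψ j⟫ = μ j * ⟪w, ψ j⟫
  have L1 : ∀ w ∈ Submodule.span ℂ (Set.range ψ), ∀ j,
      (inner ℂ w (E (ψ j)) : ℂ) = μ j * inner ℂ w (ψ j) := by
    intro w hw
    induction hw using Submodule.span_induction with
    | mem w hw =>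
      obtain ⟨i, rfl⟩ := hw
      intro j
      by_cases hij : i = j
      · subst hij
        show (inner ℂ (ψ i) (E (ψ i)) : ℂ) = (inner ℂ (ψ i) (E (ψ i)) / n i) * inner ℂ (ψ i) (ψ i)
        rw [div_mul_cancel₀ _ (hn0 i)]
      · rw [hEψ i j hij, hψorth i j hij, mul_zero]
    | zero => intro j; simp
    | add a b _ _ ha hb => intro j; rw [inner_add_left, inner_add_left, ha j, hb j]; ring
    | smul r a _ ha => intro j; rw [inner_smul_left, inner_smul_left, ha j]; ring
  set c : ℂ := inner ℂ (e x) (E (e x)) with hc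
  -- compute ⟪e x, E ψ j⟫ = ψ j x * c
  have hx1 : ∀ j, (inner ℂ (e x) (E (ψ j)) : ℂ) = ψ j x * c := by
    intro j
    have hψV : ψ j ∈ Submodule.span ℂ (Set.range ψ) := Submodule.subset_span ⟨j, rfl⟩
    conv_lhs => rw [hdecomp (ψ j) hψV]
    rw [map_sum, inner_sum]
    rw [Finset.sum_eq_single x]
    · rw [map_smul, inner_smul_right]
    · intro b hb hbx
      rw [map_smul, inner_smul_right, hxE b hb hbx, mul_zero]
    · exact fun h => absurd hx h
  have hinner_ex : ∀ j, (inner ℂ (e x) (ψ j) : ℂ) = ψ j x := by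
    intro j
    simp [e, EuclideanSpace.inner_single_left]
  -- hence μ j = c
  have hμc : ∀ j, μ j = c := by
    intro j
    have h1 := L1 (e x) (heV x hx) j
    rw [hx1 j, hinner_ex j] at h1
    have hne : (ψ j x : ℂ) ≠ 0 := by
      have h2 := hxψ j
      rwa [hinner_ex j] at h2
    rw [mul_comm (μ j) (ψ j x)] at h1
    exact (mul_left_cancel₀ hne h1).symm
  -- main identity: for w v in span, ⟪w, E v⟫ = c * ⟪w, v⟫
  have L2 : ∀ w ∈ Submodule.span ℂ (Set.range ψ), ∀ v ∈ Submodule.span ℂ (Set.range ψ),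
      (inner ℂ w (E v) : ℂ) = c * inner ℂ w v := by
    intro w hw v hv
    induction hv using Submodule.span_induction with
    | mem v hv =>
      obtain ⟨j, rfl⟩ := hv
      rw [L1 w hw j, hμc j]
    | zero => simp
    | add a b _ _ ha hb => rw [map_add, inner_add_right, inner_add_right, ha, hb]; ring
    | smul r a _ ha => rw [map_smul, inner_smul_right, inner_smul_right, ha]; ring
  have hsingle : ∀ y z : Fin d, (inner ℂ (e y) (e z) : ℂ) = if z = y then 1 else 0 := by
    intro y z
    simp [e, EuclideanSpace.inner_single_left, EuclideanSpace.single_apply]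
    exact if_congr eq_comm rfl rfl
  constructor
  · intro y hy z hz hyz
    have h := L2 (e y) (heV y hy) (e z) (heV z hz)
    rw [hsingle y z, if_neg (Ne.symm hyz), mul_zero] at h
    exact h
  · intro y hy z hz
    have h1 := L2 (e y) (heV y hy) (e y) (heV y hy)
    have h2 := L2 (e z) (heV z hz) (e z) (heV z hz)
    rw [hsingle y y, if_pos rfl, mul_one] at h1
    rw [hsingle z z, if_pos rfl, mul_one] at h2
    show (inner ℂ (e y) (E (e y)) : ℂ) = inner ℂ (e z) (E (e z))
    rw [h1, h2]
end

section
/- The family B₂ ∪ B₃ ∪ B₄ ∪ B₅ ∪ B₁ ∪ {|000⟩} of vectors in ℂ^d ⊗ ℂ^d ⊗ ℂ^d (for d ≥ 2), where B₁ = {|100⟩, |001⟩, |010⟩}, B₂ = {(|00i⟩+|(i-1)(i-1)0⟩)/√2 : 2 ≤ i ≤ d-1}, B₃ = {(|0i0⟩+|(i-1)0(i-1)⟩)/√2 : 2 ≤ i ≤ d-1}, B₄ = {(|0(i-1)(i-1)⟩+|i00⟩)/√2 : 2 ≤ i ≤ d-1}, B₅ = {(|0ij⟩+|ij0⟩+|j0i⟩)/√3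 : 1 ≤ i,j ≤ d-1, (i,j) ∉ {(1,1),…,(d-2,d-2)}}, is an orthonormal family of exactly d² + 1 vectors. -/
open scoped BigOperators

open Fin.NatCast in
/-- |abc⟩ in ℂ^d ⊗ ℂ^d ⊗ ℂ^d, realized as EuclideanSpace on `Fin d × Fin d × Fin d`. -/
noncomputable def ket3 (d : ℕ) [NeZero d] (a b c : ℕ) :
    EuclideanSpace ℂ (Fin d × Fin d × Fin d) :=
  EuclideanSpace.single ((a : Fin d), (b : Fin d), (c : Fin d)) 1

/-- The tripartite construction B₁ ∪ B₂ ∪ B₃ ∪ B₄ ∪ B₅ in ℂ^d ⊗ ℂ^d ⊗ ℂ^d. -/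
noncomputable def tripartiteSet (d : ℕ) [NeZero d] :
    Set (EuclideanSpace ℂ (Fin d × Fin d × Fin d)) :=
  {ket3 d 1 0 0, ket3 d 0 0 1, ket3 d 0 1 0} ∪
  {v | ∃ i, 2 ≤ i ∧ i ≤ d - 1 ∧
    v = (Real.sqrt 2 : ℂ)⁻¹ • (ket3 d 0 0 i + ket3 d (i-1) (i-1) 0)} ∪
  {v | ∃ i, 2 ≤ i ∧ i ≤ d - 1 ∧
    v = (Real.sqrt 2 : ℂ)⁻¹ • (ket3 d 0 i 0 + ket3 d (i-1) 0 (i-1))} ∪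
  {v | ∃ i, 2 ≤ i ∧ i ≤ d - 1 ∧
    v = (Real.sqrt 2 : ℂ)⁻¹ • (ket3 d 0 (i-1) (i-1) + ket3 d i 0 0)} ∪
  {v | ∃ i j, 1 ≤ i ∧ i ≤ d - 1 ∧ 1 ≤ j ∧ j ≤ d - 1 ∧ ¬(i = j ∧ i ≤ d - 2) ∧
    v = (Real.sqrt 3 : ℂ)⁻¹ • (ket3 d 0 i j + ket3 d i j 0 + ket3 d j 0 i)}

namespace Stmt4Aux

open Finset

variable (d : ℕ) [NeZero d]

open Fin.NatCast in
lemma cast_inj {a a' : ℕ} (ha : a < d) (ha' : a' < d) : ((a : Fin d) = (a' : Fin d)) ↔ a = a' := by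
  constructor
  · intro h
    have := congrArg Fin.val h
    rwa [Fin.val_cast_of_lt ha, Fin.val_cast_of_lt ha'] at this
  · rintro rfl; rfl

lemma inner_ket3 {a b c a' b' c' : ℕ} (ha : a < d) (hb : b < d) (hc : c < d)
    (ha' : a' < d) (hb' : b' < d) (hc' : c' < d) :
    (inner ℂ (ket3 d a b c) (ket3 d a' b' c') : ℂ) =
      if a = a' ∧ b = b' ∧ c = c' then 1 else 0 := by
  rw [ket3, ket3, EuclideanSpace.inner_single_left]
  simp only [map_one, one_mul, EuclideanSpace.single_apply]
  by_cases h : a = a' ∧ b = b' ∧ c = c'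
  · obtain ⟨rfl, rfl, rfl⟩ := h; simp
  · rw [if_neg h, if_neg]
    intro he
    rw [Prod.ext_iff, Prod.ext_iff] at he
    obtain ⟨h1, h2, h3⟩ := he
    exact h ⟨(cast_inj d ha ha').mp h1, (cast_inj d hb hb').mp h2, (cast_inj d hc hc').mp h3⟩

noncomputable def kv (S : Finset (ℕ × ℕ × ℕ)) : EuclideanSpace ℂ (Fin d × Fin d × Fin d) :=
  (Real.sqrt S.card : ℂ)⁻¹ • ∑ k ∈ S, ket3 d k.1 k.2.1 k.2.2

def ok (S : Finset (ℕ × ℕ × ℕ)) : Prop := ∀ x ∈ S, x.1 < d ∧ x.2.1 < d ∧ x.2.2 < d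

lemma inner_kv (S T : Finset (ℕ × ℕ × ℕ)) (hS : ok d S) (hT : ok d T) :
    (inner ℂ (kv d S) (kv d T) : ℂ) =
      ((Real.sqrt S.card : ℂ))⁻¹ * (Real.sqrt T.card : ℂ)⁻¹ * ((S ∩ T).card : ℂ) := by
  rw [kv, kv, inner_smul_left, inner_smul_right, sum_inner]
  simp only [inner_sum]
  have : ∀ x ∈ S, ∀ y ∈ T, (inner ℂ (ket3 d x.1 x.2.1 x.2.2) (ket3 d y.1 y.2.1 y.2.2) : ℂ)
      = if x = y then 1 else 0 := by
    intro x hx y hy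
    obtain ⟨h1, h2, h3⟩ := hS x hx
    obtain ⟨h4, h5, h6⟩ := hT y hy
    rw [inner_ket3 d h1 h2 h3 h4 h5 h6]
    congr 1
    simp [Prod.ext_iff]
  rw [Finset.sum_congr rfl fun x hx => Finset.sum_congr rfl fun y hy => this x hx y hy]
  have hsum : ∑ x ∈ S, ∑ y ∈ T, (if x = y then (1:ℂ) else 0) = ((S ∩ T).card : ℂ) := by
    simp only [Finset.sum_ite_eq, Finset.sum_boole]
    rw [Finset.filter_mem_eq_inter]
  rw [hsum]
  rw [map_inv₀, Complex.conj_ofReal]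
  ring

lemma inner_kv_disjoint {S T : Finset (ℕ × ℕ × ℕ)} (hS : ok d S) (hT : ok d T)
    (h : Disjoint S T) : (inner ℂ (kv d S) (kv d T) : ℂ) = 0 := by
  rw [inner_kv d S T hS hT, Finset.disjoint_iff_inter_eq_empty.mp h]
  simp

lemma inner_kv_self {S : Finset (ℕ × ℕ × ℕ)} (hS : ok d S) (hne : S.Nonempty) :
    (inner ℂ (kv d S) (kv d S) : ℂ) = 1 := by
  rw [inner_kv d S S hS hS, Finset.inter_self]
  have h0 : (0:ℝ) < S.card := by exact_mod_cast Finset.card_pos.mpr hne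
  have hs : Real.sqrt S.card ≠ 0 := by positivity
  have key : ((Real.sqrt S.card)⁻¹ * (Real.sqrt S.card)⁻¹ * (S.card:ℝ)) = 1 := by
    rw [← mul_inv, Real.mul_self_sqrt h0.le]
    field_simp
  exact_mod_cast key

lemma kv_ne {S T : Finset (ℕ × ℕ × ℕ)} (hS : ok d S) (hT : ok d T) (hne : S.Nonempty)
    (h : Disjoint S T) : kv d S ≠ kv d T := by
  intro he
  have h1 := inner_kv_self d hS hne
  nth_rewrite 2 [he] at h1
  rw [inner_kv_disjoint d hS hT h] at h1
  exact one_ne_zero h1.symm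

def G (d : ℕ) (p : ℕ × ℕ) : Finset (ℕ × ℕ × ℕ) :=
  if p.1 = 0 ∧ p.2 = 0 then {(1,0,0)}
  else if p.1 = 0 ∧ p.2 = 1 then {(0,0,1)}
  else if p.1 = 1 ∧ p.2 = 0 then {(0,1,0)}
  else if p.1 = 0 then {(0,0,p.2),(p.2-1,p.2-1,0)}
  else if p.2 = 0 then {(0,p.1,0),(p.1-1,0,p.1-1)}
  else if p.1 = p.2 ∧ p.1 ≤ d-2 then {(0,p.1,p.1),(p.1+1,0,0)}
  else {(0,p.1,p.2),(p.1,p.2,0),(p.2,0,p.1)}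

def H (d : ℕ) : Option (ℕ × ℕ) → Finset (ℕ × ℕ × ℕ)
  | none => {(0,0,0)}
  | some p => G d p

def cls (d : ℕ) (x : ℕ × ℕ × ℕ) : Option (ℕ × ℕ) :=
  if x.1 = 0 then
    if x.2.1 = 0 then (if x.2.2 = 0 then none else some (0, x.2.2))
    else if x.2.2 = 0 then some (x.2.1, 0)
    else if x.2.1 = x.2.2 ∧ x.2.1 ≤ d-2 then some (x.2.1, x.2.1)
    else some (x.2.1, x.2.2)
  else if x.2.1 = 0 ∧ x.2.2 = 0 then (if x.1 = 1 then some (0,0) else some (x.1-1, x.1-1))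
  else if x.2.1 = 0 then
    (if x.1 = x.2.2 ∧ x.1 ≤ d-2 then some (x.1+1, 0) else some (x.2.2, x.1))
  else if x.2.2 = 0 then
    (if x.1 = x.2.1 ∧ x.1 ≤ d-2 then some (0, x.1+1) else some (x.1, x.2.1))
  else none

lemma cls_G (hd : 2 ≤ d) {i j : ℕ} (hi : i < d) (hj : j < d) :
    ∀ x ∈ G d (i,j), cls d x = some (i,j) := by
  intro x hx
  simp only [G] at hx
  split_ifs at hx with h1 h2 h3 h4 h5 h6 <;>
  simp only [Finset.mem_insert, Finset.mem_singleton] at hx <;>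
  first
    | (obtain rfl | rfl | rfl := hx) | (obtain rfl | rfl := hx) | (obtain rfl := hx)
  all_goals (
    simp only [cls]
    try dsimp only
    split_ifs <;> try rfl
    all_goals
      try (simp only [eq_self_iff_true, true_and, and_true, not_true_eq_false, false_and,
        and_false, not_false_eq_true, Option.some.injEq, Prod.mk.injEq] at *)
    all_goals omega)

lemma cls_H (hd : 2 ≤ d) {o : Option (ℕ × ℕ)} (ho : ∀ p ∈ o, p.1 < d ∧ p.2 < d) :
    ∀ x ∈ H d o, cls d x = o := by
  match o with
  | none =>
    intro x hx
    simp only [H, Finset.mem_singleton] at hx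
    subst hx
    simp [cls]
  | some (i, j) =>
    have h := ho (i, j) rfl
    exact cls_G d hd h.1 h.2

lemma ok_H (hd : 2 ≤ d) {o : Option (ℕ × ℕ)} (ho : ∀ p ∈ o, p.1 < d ∧ p.2 < d) :
    ok d (H d o) := by
  match o with
  | none =>
    intro x hx
    simp only [H, Finset.mem_singleton] at hx
    subst hx
    refine ⟨?_, ?_, ?_⟩ <;> (first | omega | (dsimp only; omega))
  | some (i, j) =>
    obtain ⟨hi, hj⟩ := ho (i, j) rfl
    intro x hx
    simp only [H, G] at hx
    split_ifs at hx with h1 h2 h3 h4 h5 h6 <;>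
    simp only [Finset.mem_insert, Finset.mem_singleton] at hx <;>
    first
      | (obtain rfl | rfl | rfl := hx) | (obtain rfl | rfl := hx) | (obtain rfl := hx)
    all_goals (refine ⟨?_, ?_, ?_⟩ <;> (first | omega | (dsimp only; omega)))

lemma nonempty_H (o : Option (ℕ × ℕ)) : (H d o).Nonempty := by
  match o with
  | none => exact Finset.singleton_nonempty _
  | some (i, j) =>
    simp only [H, G]
    split_ifs <;> simp

lemma H_disj (hd : 2 ≤ d) {o o' : Option (ℕ × ℕ)}
    (ho : ∀ p ∈ o, p.1 < d ∧ p.2 < d) (ho' : ∀ p ∈ o', p.1 < d ∧ p.2 < d)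
    (hne : o ≠ o') : Disjoint (H d o) (H d o') := by
  rw [Finset.disjoint_left]
  intro x hx hx'
  exact hne ((cls_H d hd ho x hx).symm.trans (cls_H d hd ho' x hx'))

lemma kv_single (x : ℕ × ℕ × ℕ) : kv d {x} = ket3 d x.1 x.2.1 x.2.2 := by
  simp [kv]

lemma kv_pair {x y : ℕ × ℕ × ℕ} (h : x ≠ y) :
    kv d {x, y} = (Real.sqrt 2 : ℂ)⁻¹ •
      (ket3 d x.1 x.2.1 x.2.2 + ket3 d y.1 y.2.1 y.2.2) := by
  rw [kv, Finset.card_pair h, Finset.sum_pair h]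
  norm_num

lemma kv_triple {x y z : ℕ × ℕ × ℕ} (h1 : x ≠ y) (h2 : x ≠ z) (h3 : y ≠ z) :
    kv d {x, y, z} = (Real.sqrt 3 : ℂ)⁻¹ •
      (ket3 d x.1 x.2.1 x.2.2 + ket3 d y.1 y.2.1 y.2.2 + ket3 d z.1 z.2.1 z.2.2) := by
  have hx : x ∉ ({y, z} : Finset (ℕ × ℕ × ℕ)) := by simp [h1, h2]
  rw [kv, Finset.sum_insert hx, Finset.sum_pair h3, Finset.card_insert_of_notMem hx,
    Finset.card_pair h3, add_assoc]
  norm_num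

def O (d : ℕ) : Finset (Option (ℕ × ℕ)) :=
  insert none ((Finset.range d ×ˢ Finset.range d).image some)

lemma mem_O_some {i j : ℕ} : some (i, j) ∈ O d ↔ i < d ∧ j < d := by
  simp [O]

lemma mem_O_none : none ∈ O d := by simp [O]

lemma valid_of_mem_O {o : Option (ℕ × ℕ)} (ho : o ∈ O d) :
    ∀ p ∈ o, p.1 < d ∧ p.2 < d := by
  intro p hp
  match o, hp with
  | some p, rfl => exact (mem_O_some d).mp ho

lemma card_O : (O d).card = d ^ 2 + 1 := by
  rw [O, Finset.card_insert_of_notMem (by simp),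
    Finset.card_image_of_injective _ (Option.some_injective _)]
  simp [sq]

lemma G_eval_00 : G d (0,0) = {(1,0,0)} := by simp [G]
lemma G_eval_01 : G d (0,1) = {(0,0,1)} := by simp [G]
lemma G_eval_10 : G d (1,0) = {(0,1,0)} := by simp [G]

lemma G_eval_B2 {j : ℕ} (h2 : 2 ≤ j) : G d (0,j) = {(0,0,j),(j-1,j-1,0)} := by
  simp only [G]
  rw [if_neg (by omega), if_neg (by omega), if_neg (by omega), if_pos trivial]

lemma G_eval_B3 {i : ℕ} (h2 : 2 ≤ i) : G d (i,0) = {(0,i,0),(i-1,0,i-1)} := by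
  simp only [G]
  rw [if_neg (by omega), if_neg (by omega), if_neg (by omega), if_neg (by omega), if_pos trivial]

lemma G_eval_B4 {i : ℕ} (h1 : 1 ≤ i) (h2 : i ≤ d-2) : G d (i,i) = {(0,i,i),(i+1,0,0)} := by
  simp only [G]
  rw [if_neg (by omega), if_neg (by omega), if_neg (by omega), if_neg (by omega),
    if_neg (by omega), if_pos ⟨trivial, h2⟩]

lemma G_eval_B5 {i j : ℕ} (hi : 1 ≤ i) (hj : 1 ≤ j) (h : ¬(i = j ∧ i ≤ d-2)) :
    G d (i,j) = {(0,i,j),(i,j,0),(j,0,i)} := by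
  simp only [G]
  rw [if_neg (by omega), if_neg (by omega), if_neg (by omega), if_neg (by omega),
    if_neg (by omega), if_neg (by omega)]


lemma main_eq (hd : 2 ≤ d) :
    tripartiteSet d ∪ {ket3 d 0 0 0} = (fun o => kv d (H d o)) '' ↑(O d) := by
  ext v
  constructor
  · rintro (((((h | ⟨i, h2, h1, rfl⟩) | ⟨i, h2, h1, rfl⟩) | ⟨i, h2, h1, rfl⟩) |
      ⟨i, j, hi1, hi2, hj1, hj2, hij, rfl⟩) | rfl)
    · rcases h with rfl | rfl | rfl
      · exact ⟨some (0,0), Finset.mem_coe.mpr ((mem_O_some d).mpr ⟨by omega, by omega⟩),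
          by beta_reduce; rw [show H d (some (0,0)) = G d (0,0) from rfl, G_eval_00, kv_single]⟩
      · exact ⟨some (0,1), Finset.mem_coe.mpr ((mem_O_some d).mpr ⟨by omega, by omega⟩),
          by beta_reduce; rw [show H d (some (0,1)) = G d (0,1) from rfl, G_eval_01, kv_single]⟩
      · exact ⟨some (1,0), Finset.mem_coe.mpr ((mem_O_some d).mpr ⟨by omega, by omega⟩),
          by beta_reduce; rw [show H d (some (1,0)) = G d (1,0) from rfl, G_eval_10, kv_single]⟩
    · refine ⟨some (0,i), Finset.mem_coe.mpr ((mem_O_some d).mpr ⟨by omega, by omega⟩), ?_⟩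
      beta_reduce; rw [show H d (some (0,i)) = G d (0,i) from rfl, G_eval_B2 d h2,
        kv_pair d (by simp [Prod.ext_iff] <;> omega)]
    · refine ⟨some (i,0), Finset.mem_coe.mpr ((mem_O_some d).mpr ⟨by omega, by omega⟩), ?_⟩
      beta_reduce; rw [show H d (some (i,0)) = G d (i,0) from rfl, G_eval_B3 d h2,
        kv_pair d (by simp [Prod.ext_iff] <;> omega)]
    · refine ⟨some (i-1,i-1), Finset.mem_coe.mpr ((mem_O_some d).mpr ⟨by omega, by omega⟩), ?_⟩
      have e : i - 1 + 1 = i := by omega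
      beta_reduce; rw [show H d (some (i-1,i-1)) = G d (i-1,i-1) from rfl,
        G_eval_B4 d (by omega) (by omega), e, kv_pair d (by simp [Prod.ext_iff] <;> omega)]
    · refine ⟨some (i,j), Finset.mem_coe.mpr ((mem_O_some d).mpr ⟨by omega, by omega⟩), ?_⟩
      beta_reduce; rw [show H d (some (i,j)) = G d (i,j) from rfl, G_eval_B5 d (by omega) (by omega) hij,
        kv_triple d (by simp [Prod.ext_iff] <;> omega) (by simp [Prod.ext_iff] <;> omega)
          (by simp [Prod.ext_iff] <;> omega)]
    · exact ⟨none, Finset.mem_coe.mpr (mem_O_none d),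
        by beta_reduce; rw [show H d none = {(0,0,0)} from rfl, kv_single]⟩
  · rintro ⟨o, ho, rfl⟩
    rw [Finset.mem_coe] at ho
    rcases o with _ | ⟨i, j⟩
    · refine Or.inr ?_
      beta_reduce; rw [show H d none = {(0,0,0)} from rfl, kv_single]
      rfl
    · obtain ⟨hi, hj⟩ := (mem_O_some d).mp ho
      by_cases c1 : i = 0 ∧ j = 0
      · obtain ⟨rfl, rfl⟩ := c1
        refine Or.inl (Or.inl (Or.inl (Or.inl (Or.inl ?_))))
        beta_reduce; rw [show H d (some (0,0)) = G d (0,0) from rfl, G_eval_00, kv_single]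
        exact Set.mem_insert _ _
      · by_cases c2 : i = 0 ∧ j = 1
        · obtain ⟨rfl, rfl⟩ := c2
          refine Or.inl (Or.inl (Or.inl (Or.inl (Or.inl ?_))))
          beta_reduce; rw [show H d (some (0,1)) = G d (0,1) from rfl, G_eval_01, kv_single]
          exact Set.mem_insert_iff.mpr (Or.inr (Set.mem_insert _ _))
        · by_cases c3 : i = 1 ∧ j = 0
          · obtain ⟨rfl, rfl⟩ := c3
            refine Or.inl (Or.inl (Or.inl (Or.inl (Or.inl ?_))))
            beta_reduce; rw [show H d (some (1,0)) = G d (1,0) from rfl, G_eval_10, kv_single]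
            exact Set.mem_insert_iff.mpr (Or.inr (Set.mem_insert_iff.mpr (Or.inr rfl)))
          · by_cases c4 : i = 0
            · subst c4
              refine Or.inl (Or.inl (Or.inl (Or.inl (Or.inr ⟨j, by omega, by omega, ?_⟩))))
              beta_reduce; rw [show H d (some (0,j)) = G d (0,j) from rfl, G_eval_B2 d (by omega),
                kv_pair d (by simp [Prod.ext_iff] <;> omega)]
            · by_cases c5 : j = 0
              · subst c5
                refine Or.inl (Or.inl (Or.inl (Or.inr ⟨i, by omega, by omega, ?_⟩)))
                beta_reduce; rw [show H d (some (i,0)) = G d (i,0) from rfl, G_eval_B3 d (by omega),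
                  kv_pair d (by simp [Prod.ext_iff] <;> omega)]
              · by_cases c6 : i = j ∧ i ≤ d - 2
                · obtain ⟨rfl, hle⟩ := c6
                  refine Or.inl (Or.inl (Or.inr ⟨i+1, by omega, by omega, ?_⟩))
                  beta_reduce; rw [show H d (some (i,i)) = G d (i,i) from rfl,
                    G_eval_B4 d (by omega) hle,
                    kv_pair d (by simp [Prod.ext_iff] <;> omega)]
                  simp only [Nat.add_sub_cancel]
                · refine Or.inl (Or.inr ⟨i, j, by omega, by omega, by omega, by omega, c6, ?_⟩)
                  beta_reduce; rw [show H d (some (i,j)) = G d (i,j) from rfl,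
                    G_eval_B5 d (by omega) (by omega) c6,
                    kv_triple d (by simp [Prod.ext_iff] <;> omega) (by simp [Prod.ext_iff] <;> omega)
                      (by simp [Prod.ext_iff] <;> omega)]

end Stmt4Aux

open Stmt4Aux

theorem stmt4 (d : ℕ) (hd : 2 ≤ d) [NeZero d] :
    Orthonormal ℂ
      ((↑) : (tripartiteSet d ∪ {ket3 d 0 0 0} : Set (EuclideanSpace ℂ (Fin d × Fin d × Fin d)))
        → EuclideanSpace ℂ (Fin d × Fin d × Fin d)) ∧
    (tripartiteSet d ∪ {ket3 d 0 0 0}).ncard = d ^ 2 + 1 := by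

  classical
  have hmain := main_eq d hd
  have hinj : Set.InjOn (fun o => kv d (H d o)) ↑(O d) := by
    intro o ho o' ho' he
    by_contra h
    exact kv_ne d (ok_H d hd (valid_of_mem_O d (Finset.mem_coe.mp ho)))
      (ok_H d hd (valid_of_mem_O d (Finset.mem_coe.mp ho')))
      (nonempty_H d o)
      (H_disj d hd (valid_of_mem_O d (Finset.mem_coe.mp ho))
        (valid_of_mem_O d (Finset.mem_coe.mp ho')) h) he
  constructor
  · rw [hmain, orthonormal_subtype_iff_ite]
    rintro v ⟨o, ho, rfl⟩ w ⟨o', ho', rfl⟩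
    rw [Finset.mem_coe] at ho ho'
    have vo := valid_of_mem_O d ho
    have vo' := valid_of_mem_O d ho'
    by_cases h : o = o'
    · subst h
      rw [if_pos rfl]
      exact inner_kv_self d (ok_H d hd vo) (nonempty_H d o)
    · rw [if_neg, inner_kv_disjoint d (ok_H d hd vo) (ok_H d hd vo') (H_disj d hd vo vo' h)]
      exact kv_ne d (ok_H d hd vo) (ok_H d hd vo') (nonempty_H d o) (H_disj d hd vo vo' h)
  · rw [hmain, Set.ncard_image_of_injOn hinj, Set.ncard_coe_finset, card_O]
end
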